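/- Let r ≥ 1 and let G be a simple graph such that for every vertex v of G the subgraph of G induced on the ball B_G(v,r) of radius r around v is bipartite. Then for every vertex (x,k) of the bipartite double cover G̃, the projection π restricts to an isomorphism from the subgraph of G̃ induced on the ball B_{G̃}((x,k), r−1) onto the subgraph of G induced on the ball B_G(x, r−1). -/

import Mathlib

/-- The bipartite double cover of a simple graph `G`: vertices are pairs `(x, i)` with
`x` a vertex of `G` and `i ∈ ℤ/2ℤ`, and `(x, i)` is adjacent to `(y, j)` iff
`x` is adjacent to `y` in `G` and `j = i + 1`. -/
def doubleCover {V : Type*} (G : SimpleGraph V) : SimpleGraph (V × ZMod 2) where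
  Adj p q := G.Adj p.1 q.1 ∧ q.2 = p.2 + 1
  symm := by
    constructor
    rintro ⟨x, i⟩ ⟨y, j⟩ ⟨h, hj⟩
    refine ⟨h.symm, ?_⟩
    subst hj
    simp [add_assoc, CharTwo.add_self_eq_zero]
  loopless := by
    constructor
    rintro ⟨x, i⟩ ⟨h, _⟩
    exact G.irrefl h

/-- The ball of radius `r` around a vertex `v` of a simple graph `G`: the set of vertices
at graph distance at most `r` from `v`, i.e. reachable from `v` by a walk of length at
most `r`. -/
def ball {V : Type*} (G : SimpleGraph V) (v : V) (r : ℕ) : Set V :=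
  {u : V | ∃ w : G.Walk v u, w.length ≤ r}

lemma zmod2_ne_iff : ∀ u v : ZMod 2, u ≠ v ↔ v = u + 1 := by decide

lemma fin2_cast_ne : ∀ u v : Fin 2, u ≠ v → ((u : ZMod 2) ≠ (v : ZMod 2)) := by decide

lemma dc_snd {V : Type*} (G : SimpleGraph V) :
    ∀ {p q : V × ZMod 2} (w : (doubleCover G).Walk p q), q.2 = p.2 + w.length := by
  intro p q w
  induction w with
  | nil => simp
  | @cons p b q h w ih =>
    rw [SimpleGraph.Walk.length_cons]
    rw [ih, h.2]
    push_cast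
    ring

lemma dc_lift {V : Type*} (G : SimpleGraph V) {a b : V} (w : G.Walk a b) :
    ∀ i : ZMod 2, ∃ w' : (doubleCover G).Walk (a, i) (b, i + w.length),
      w'.length = w.length := by
  induction w with
  | nil => intro i; exact ⟨SimpleGraph.Walk.nil.copy rfl (by simp), by rw [SimpleGraph.Walk.length_copy]; rfl⟩
  | @cons a c b h w ih =>
    intro i
    obtain ⟨w', hw'⟩ := ih (i + 1)
    have key : i + 1 + (w.length : ZMod 2) = i + (((SimpleGraph.Walk.cons h w).length : ℕ) : ZMod 2) := by
      rw [SimpleGraph.Walk.length_cons]; push_cast; ring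
    refine ⟨SimpleGraph.Walk.cons ⟨h, rfl⟩ (w'.copy rfl (by rw [key])), ?_⟩
    exact congrArg (· + 1) ((SimpleGraph.Walk.length_copy _ _ _).trans hw')

def dc_proj {V : Type*} (G : SimpleGraph V) : doubleCover G →g G :=
  ⟨Prod.fst, fun h => h.1⟩


/-- Let `r ≥ 1` and let `G` be a simple graph all of whose balls of radius `r` induce a
bipartite subgraph.  Then for every vertex `(x, k)` of the bipartite double cover of `G`,
the projection `(y, i) ↦ y` restricts to an isomorphism from the subgraph of the double
cover induced on the ball of radius `r - 1` around `(x, k)` onto the subgraph of `G`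
induced on the ball of radius `r - 1` around `x`. -/
theorem doubleCover_ball_iso {V : Type*} (G : SimpleGraph V) (r : ℕ) (hr : 1 ≤ r)
    (hballs : ∀ v : V, (G.induce (ball G v r)).Colorable 2)
    (x : V) (k : ZMod 2) :
    ∃ φ : (doubleCover G).induce (ball (doubleCover G) (x, k) (r - 1)) ≃g
            G.induce (ball G x (r - 1)),
      ∀ p : ball (doubleCover G) (x, k) (r - 1), (φ p : V) = (p : V × ZMod 2).1 := by
  classical
  set S := ball G x r with hSdef
  have hsub : ball G x (r - 1) ⊆ S := by
    rintro y ⟨w, hw⟩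
    exact ⟨w, hw.trans (Nat.sub_le r 1)⟩
  obtain ⟨c⟩ := hballs x
  set D : V → ZMod 2 := fun y => if h : y ∈ S then ((c ⟨y, h⟩ : Fin 2) : ZMod 2) else 0
    with hDdef
  have hD : ∀ {a b : V}, a ∈ S → b ∈ S → G.Adj a b → D b = D a + 1 := by
    intro a b ha hb hab
    have hne : c ⟨a, ha⟩ ≠ c ⟨b, hb⟩ := c.valid (by exact hab)
    have : D a ≠ D b := by
      simp only [hDdef, dif_pos ha, dif_pos hb]
      exact fin2_cast_ne _ _ (by simpa [ha, hb] using hne)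
    exact (zmod2_ne_iff _ _).mp this
  -- all vertices on a short walk from x lie in S
  have hsupp : ∀ {b : V} (w : G.Walk x b), w.length ≤ r - 1 → ∀ v ∈ w.support, v ∈ S := by
    intro b w hw v hv
    exact ⟨w.takeUntil v hv, ((SimpleGraph.Walk.length_takeUntil_le w hv).trans hw).trans
      (Nat.sub_le r 1)⟩
  -- color along a walk inside S
  have hWalkD : ∀ {a b : V} (w : G.Walk a b), (∀ v ∈ w.support, v ∈ S) →
      D b = D a + w.length := by
    intro a b w
    induction w with
    | nil => simp
    | @cons a e b h w ih =>
      intro hmem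
      have ha : a ∈ S := hmem a (by simp)
      have he : e ∈ S := hmem e (by simp [SimpleGraph.Walk.support_cons])
      have h1 : D e = D a + 1 := hD ha he h
      have h2 : D b = D e + w.length := ih (fun v hv => hmem v (by
        simp [SimpleGraph.Walk.support_cons, hv]))
      rw [h2, h1, SimpleGraph.Walk.length_cons]
      push_cast
      ring
  -- forward fact
  have F1 : ∀ p : V × ZMod 2, p ∈ ball (doubleCover G) (x, k) (r - 1) →
      p.1 ∈ ball G x (r - 1) ∧ p.2 = k + D p.1 - D x := by
    rintro p ⟨w, hw⟩
    have hlen := dc_snd G w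
    have hproj : ((w.map (dc_proj G)).length ≤ r - 1) := by
      rw [SimpleGraph.Walk.length_map]; exact hw
    refine ⟨⟨w.map (dc_proj G), hproj⟩, ?_⟩
    have hDp : D p.1 = D x + (w.map (dc_proj G)).length :=
      hWalkD _ (hsupp _ hproj)
    rw [SimpleGraph.Walk.length_map] at hDp
    rw [hlen, hDp]
    ring
  -- lift fact
  have F2 : ∀ y : V, y ∈ ball G x (r - 1) →
      (y, k + D y - D x) ∈ ball (doubleCover G) (x, k) (r - 1) := by
    rintro y ⟨w, hw⟩
    obtain ⟨w', hw'⟩ := dc_lift G w k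
    have hDy : D y = D x + w.length := hWalkD w (hsupp w hw)
    have hkey : (y, k + (w.length : ZMod 2)) = (y, k + D y - D x) := by
      rw [hDy]; congr 1; ring
    exact ⟨w'.copy rfl hkey, by rw [SimpleGraph.Walk.length_copy, hw']; exact hw⟩
  let e : ↥(ball (doubleCover G) (x, k) (r - 1)) ≃ ↥(ball G x (r - 1)) :=
    { toFun := fun p => ⟨(p : V × ZMod 2).1, (F1 _ p.2).1⟩
      invFun := fun y => ⟨((y : V), k + D y - D x), F2 _ y.2⟩
      left_inv := by
        rintro ⟨p, hp⟩
        apply Subtype.ext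
        exact Prod.ext rfl ((F1 p hp).2).symm
      right_inv := fun y => rfl }
  refine ⟨⟨e, ?_⟩, fun p => rfl⟩
  rintro ⟨p, hp⟩ ⟨q, hq⟩
  show G.Adj p.1 q.1 ↔ (doubleCover G).Adj p q
  constructor
  · intro hadj
    refine ⟨hadj, ?_⟩
    rw [(F1 p hp).2, (F1 q hq).2,
      hD (hsub (F1 p hp).1) (hsub (F1 q hq).1) hadj]
    ring
  · exact fun h => h.1
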